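/- Let (X,d) be a non-separable perfect metric space. Then (ω₁ + 1)^{ω} embeds topologically into (CL(X), τ_{w(d)}). -/

import Mathlib

/-- The hyperspace of nonempty closed subsets of `X`. -/
def CL (X : Type*) [TopologicalSpace X] : Type _ := {A : Set X // A.Nonempty ∧ IsClosed A}

/-- The Wijsman topology on `CL X`: the weakest topology making `A ↦ d(x, A)`
continuous for every `x : X`. -/
noncomputable def WijsmanTopology (X : Type*) [MetricSpace X] : TopologicalSpace (CL X) :=
  ⨅ x : X, TopologicalSpace.induced (fun A : CL X => Metric.infDist x A.1) inferInstance

open Cardinal Ordinal Set Metric Topology Filter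
open scoped Classical

universe u v

section Aux

lemma aux_exists_eps {X : Type v} [MetricSpace X]
    (hsep : ¬ TopologicalSpace.SeparableSpace X) :
    ∃ ε : ℝ, 0 < ε ∧ ∀ s : Set X, s.Countable → ∃ x : X, ∀ y ∈ s, ε ≤ dist x y := by
  by_contra h
  push_neg at h
  apply hsep
  have h' : ∀ n : ℕ, ∃ s : Set X, s.Countable ∧ ∀ x : X, ∃ y ∈ s, dist x y < 1/(n+1) := by
    intro n
    obtain ⟨s, hsc, hs⟩ := h (1/(n+1)) (by positivity)
    exact ⟨s, hsc, fun x => by obtain ⟨y, hy, hxy⟩ := hs x; exact ⟨y, hy, by linarith⟩⟩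
  choose s hsc hsd using h'
  refine ⟨⟨⋃ n, s n, countable_iUnion hsc, ?_⟩⟩
  rw [Metric.dense_iff]
  intro x r hr
  obtain ⟨n, hn⟩ := exists_nat_one_div_lt hr
  obtain ⟨y, hy, hxy⟩ := hsd n x
  exact ⟨y, Metric.mem_ball'.2 (lt_trans hxy hn), Set.mem_iUnion.2 ⟨n, hy⟩⟩

lemma aux_sep_family {X : Type v} [MetricSpace X] {ε : ℝ}
    (key : ∀ s : Set X, s.Countable → ∃ x : X, ∀ y ∈ s, ε ≤ dist x y) :
    ∃ p : Ordinal.{u} → X, ∀ β < (Cardinal.aleph 1 : Cardinal.{u}).ord, ∀ γ < β,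
      ε ≤ dist (p β) (p γ) := by
  have junk : X := (key ∅ countable_empty).choose
  let F : ∀ β : Ordinal.{u}, (∀ γ, γ < β → X) → X := fun β ih =>
    if h : (Set.range fun γ : Set.Iio β => ih γ.1 γ.2).Countable
    then (key _ h).choose else junk
  let p : Ordinal.{u} → X := Ordinal.lt_wf.fix F
  have hp : ∀ β, p β = F β (fun γ _ => p γ) := fun β => WellFounded.fix_eq _ _ _
  refine ⟨p, fun β hβ γ hγ => ?_⟩
  have hcnt : (Set.range fun γ : Set.Iio β => p γ.1).Countable := by
    have : Countable (Set.Iio β) := by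
      rw [← Cardinal.mk_le_aleph0_iff, Cardinal.mk_Iio_ordinal]
      have h1 : β.card < Cardinal.aleph 1 := Cardinal.lt_ord.1 hβ
      have h2 : β.card ≤ Cardinal.aleph0 := by
        rw [← Cardinal.succ_aleph0] at h1
        exact Order.lt_succ_iff.mp h1
      exact Cardinal.lift_le_aleph0.mpr h2
    exact Set.countable_range _
  have hs := (key _ hcnt).choose_spec (p γ) ⟨⟨γ, hγ⟩, rfl⟩
  have hpe : p β = (key _ hcnt).choose := by
    rw [hp β]; simp only [F, dif_pos hcnt]
  rwa [hpe]

lemma aux_embed : Nonempty ((ℕ × (Set.Iio (Cardinal.aleph 1 : Cardinal.{u}).ord)) ↪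
    (Set.Iio (Cardinal.aleph 1 : Cardinal.{u}).ord)) := by
  rw [← Cardinal.le_def]
  have hA : Cardinal.aleph0 ≤ #(Set.Iio (Cardinal.aleph 1 : Cardinal.{u}).ord) := by
    rw [Cardinal.mk_Iio_ordinal, Cardinal.card_ord]
    exact Cardinal.aleph0_le_lift.mpr (Cardinal.aleph0_le_aleph 1)
  calc #(ℕ × Set.Iio (Cardinal.aleph 1 : Cardinal.{u}).ord)
      = Cardinal.lift.{u+1} #ℕ * Cardinal.lift.{0} #(Set.Iio (Cardinal.aleph 1 : Cardinal.{u}).ord) :=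
        Cardinal.mk_prod _ _
    _ = Cardinal.aleph0 * #(Set.Iio (Cardinal.aleph 1 : Cardinal.{u}).ord) := by simp
    _ ≤ #(Set.Iio (Cardinal.aleph 1 : Cardinal.{u}).ord) := le_of_eq (Cardinal.aleph0_mul_eq hA)

lemma aux_cont_iInf (e : Ordinal.{u} → ENNReal) :
    Continuous fun γ : Ordinal.{u} => ⨅ β : {β : Ordinal.{u} // β < γ}, e β.1 := by
  set g := fun γ : Ordinal.{u} => ⨅ β : {β : Ordinal.{u} // β < γ}, e β.1 with hg
  have hanti : Antitone g := by
    intro a b hab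
    exact le_iInf fun β => iInf_le_of_le ⟨β.1, lt_of_lt_of_le β.2 hab⟩ le_rfl
  rw [continuous_iff_continuousAt]
  intro o
  have hsplit : 𝓝 o = 𝓝[≤] o ⊔ 𝓝[≥] o := (nhdsLE_sup_nhdsGE o).symm
  rw [ContinuousAt, hsplit, Filter.tendsto_sup]
  constructor
  · rw [← Set.Iio_insert, nhdsWithin_insert, Filter.tendsto_sup]
    refine ⟨tendsto_pure_nhds g o, ?_⟩
    rcases Ordinal.zero_or_succ_or_isSuccLimit o with h0 | ⟨a, ha⟩ | hlim
    · subst h0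
      have : Set.Iio (0 : Ordinal.{u}) = ∅ := by ext z; simp [not_lt_zero]
      rw [this, nhdsWithin_empty]
      exact tendsto_bot
    · subst ha
      have : 𝓝[<] (Order.succ a) = (⊥ : Filter Ordinal.{u}) := by
        rw [← Filter.empty_mem_iff_bot]
        refine mem_nhdsWithin.2 ⟨Set.Ioi a, isOpen_Ioi, Order.lt_succ a, ?_⟩
        intro z hz
        exact absurd (Order.lt_succ_iff.1 hz.2) (not_le.2 (Set.mem_Ioi.1 hz.1))
      rw [this]
      exact tendsto_bot
    · have ht := (hanti.antitoneOn (Set.Iio o)).tendsto_nhdsLT (OrderBot.bddBelow _)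
      have heq : sInf (g '' Set.Iio o) = g o := by
        rw [sInf_image']
        apply le_antisymm
        · refine le_iInf fun β => ?_
          refine iInf_le_of_le ⟨Order.succ β.1, ?_⟩ ?_
          · exact Set.mem_Iio.2 (hlim.succ_lt β.2)
          · exact iInf_le_of_le ⟨β.1, Order.lt_succ β.1⟩ le_rfl
        · exact le_iInf fun a => hanti (le_of_lt a.2)
      rwa [heq] at ht
  · have hmem : {o} ∈ 𝓝[≥] o := by
      refine mem_nhdsWithin.2 ⟨Set.Iio (Order.succ o), isOpen_Iio, Order.lt_succ o, ?_⟩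
      intro z hz
      exact le_antisymm (Order.lt_succ_iff.1 hz.1) hz.2
    have hev : (fun _ : Ordinal.{u} => g o) =ᶠ[𝓝[≥] o] g :=
      Filter.eventuallyEq_of_mem hmem (fun z hz => by rw [Set.mem_singleton_iff.1 hz])
    exact Filter.Tendsto.congr' hev tendsto_const_nhds

lemma wijsman_eq_induced (X : Type v) [MetricSpace X] :
    WijsmanTopology X = TopologicalSpace.induced
      (fun (A : CL X) (x : X) => Metric.infDist x A.1) Pi.topologicalSpace := by
  unfold WijsmanTopology
  rw [show (Pi.topologicalSpace : TopologicalSpace (X → ℝ))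
      = ⨅ x : X, TopologicalSpace.induced (fun g : X → ℝ => g x) inferInstance from rfl,
    induced_iInf]
  simp only [induced_compose]
  rfl

lemma phi_inj (X : Type v) [MetricSpace X] :
    Function.Injective (fun (A : CL X) (x : X) => Metric.infDist x A.1) := by
  have key : ∀ C D : CL X, (fun x : X => Metric.infDist x C.1) = (fun x => Metric.infDist x D.1) →
      C.1 ⊆ D.1 := by
    intro C D h x hx
    have h0 : Metric.infDist x D.1 = 0 := by
      rw [← congrFun h x]; exact Metric.infDist_zero_of_mem hx
    have := (Metric.mem_closure_iff_infDist_zero D.2.1).2 h0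
    rwa [D.2.2.closure_eq] at this
  intro A B h
  exact Subtype.ext (le_antisymm (key A B h) (key B A h.symm))

lemma wijsman_t2 (X : Type v) [MetricSpace X] :
    @T2Space (CL X) (WijsmanTopology X) := by
  letI : TopologicalSpace (CL X) := WijsmanTopology X
  have h : Topology.IsEmbedding (fun (A : CL X) (x : X) => Metric.infDist x A.1) :=
    ⟨⟨wijsman_eq_induced X⟩, phi_inj X⟩
  exact h.t2Space

lemma iic_compact : CompactSpace (Set.Iic (Cardinal.aleph 1 : Cardinal.{u}).ord) := by
  rw [← Set.Icc_bot]
  exact isCompact_iff_compactSpace.1 isCompact_Icc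

end Aux

/-- If `(X,d)` is a non-separable perfect metric space, then `(ω₁ + 1)^{ω}` embeds
into `(CL X, τ_{w(d)})`. -/
theorem stmt_17 {X : Type*} [MetricSpace X]
    (hsep : ¬ TopologicalSpace.SeparableSpace X)
    (hperf : ∀ x : X, (nhdsWithin x {x}ᶜ).NeBot) :
    ∃ f : (ℕ → Set.Iic (Cardinal.aleph 1).ord) → CL X,
      @Topology.IsEmbedding _ _ _ (WijsmanTopology X) f := by
  classical
  let Ω : Ordinal := (Cardinal.aleph 1).ord
  show ∃ f : (ℕ → Set.Iic Ω) → CL X, @Topology.IsEmbedding _ _ _ (WijsmanTopology X) f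
  obtain ⟨ε, εpos, key⟩ := aux_exists_eps hsep
  obtain ⟨p, hp⟩ : ∃ p : Ordinal → X, ∀ β, β < Ω → ∀ γ, γ < β → ε ≤ dist (p β) (p γ) :=
    aux_sep_family key
  obtain ⟨e⟩ : Nonempty ((ℕ × Set.Iio Ω) ↪ Set.Iio Ω) := aux_embed
  have hΩpos : (0 : Ordinal) < Ω := by
    rw [Cardinal.lt_ord]
    simpa using lt_of_lt_of_le Cardinal.aleph0_pos (Cardinal.aleph0_le_aleph 1)
  -- the separated family
  let P : ℕ → Ordinal → X := fun n β => if h : β < Ω then p (e (n, ⟨β, h⟩)).1 else p 0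
  have hPval : ∀ n β (h : β < Ω), P n β = p (e (n, ⟨β, h⟩)).1 := fun n β h => dif_pos h
  have hPsep : ∀ m βm n βn, βm < Ω → βn < Ω → (m, βm) ≠ (n, βn) →
      ε ≤ dist (P m βm) (P n βn) := by
    intro m βm n βn hm hn hnmeq
    rw [hPval m βm hm, hPval n βn hn]
    have hij : (e (m, ⟨βm, hm⟩)).1 ≠ (e (n, ⟨βn, hn⟩)).1 := by
      intro h
      apply hnmeq
      have h2 := e.injective (Subtype.ext h)
      rw [Prod.ext_iff] at h2
      exact Prod.ext h2.1 (congrArg Subtype.val h2.2)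
    have h1 := (e (m, ⟨βm, hm⟩)).2
    have h2 := (e (n, ⟨βn, hn⟩)).2
    rcases lt_or_gt_of_ne hij with h | h
    · rw [dist_comm]; exact hp _ h2 _ h
    · exact hp _ h1 _ h
  -- scales
  let δ : ℕ → ℝ := fun n => ε / 4 * (2⁻¹ : ℝ) ^ n
  have hδpos : ∀ n, 0 < δ n := fun n => by positivity
  have hδle : ∀ n, δ n ≤ ε / 4 := by
    intro n
    have h1 : ((2:ℝ)⁻¹) ^ n ≤ 1 := pow_le_one₀ (by norm_num) (by norm_num)
    calc ε / 4 * (2⁻¹ : ℝ) ^ n ≤ ε / 4 * 1 :=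
          mul_le_mul_of_nonneg_left h1 (by positivity)
      _ = ε / 4 := mul_one _
  have hδanti : ∀ m n, m ≤ n → δ n ≤ δ m := by
    intro m n h
    exact mul_le_mul_of_nonneg_left
      (pow_le_pow_of_le_one (by norm_num) (by norm_num) h) (by positivity)
  have hδ0 : Filter.Tendsto δ Filter.atTop (𝓝 0) := by
    have h1 : Filter.Tendsto (fun n : ℕ => ((2:ℝ)⁻¹) ^ n) Filter.atTop (𝓝 0) :=
      tendsto_pow_atTop_nhds_zero_of_lt_one (by norm_num) (by norm_num)
    show Filter.Tendsto (fun n : ℕ => ε / 4 * (2⁻¹ : ℝ) ^ n) Filter.atTop (𝓝 0)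
    simpa [inv_pow] using h1.const_mul (ε / 4)
  -- perturbed points
  have hqex : ∀ n β, ∃ y : X, y ≠ P n β ∧ dist y (P n β) < δ n := by
    intro n β
    have h1 : Metric.ball (P n β) (δ n) ∩ {P n β}ᶜ ∈ nhdsWithin (P n β) {P n β}ᶜ :=
      Filter.inter_mem (nhdsWithin_le_nhds (Metric.ball_mem_nhds _ (hδpos n)))
        self_mem_nhdsWithin
    obtain ⟨y, hy⟩ := (hperf (P n β)).nonempty_of_mem h1
    exact ⟨y, hy.2, by simpa [Metric.mem_ball] using hy.1⟩
  choose q hq1 hq2 using hqex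
  have hqP : ∀ n β, dist (q n β) (P n β) ≤ ε / 4 := fun n β => (hq2 n β).le.trans (hδle n)
  have hcross : ∀ m βm n βn, βm < Ω → βn < Ω → (m, βm) ≠ (n, βn) →
      ∀ y z : X, (y = P m βm ∨ y = q m βm) → (z = P n βn ∨ z = q n βn) →
      ε / 2 ≤ dist y z := by
    intro m βm n βn hm hn hnmeq y z hy hz
    have hPP := hPsep m βm n βn hm hn hnmeq
    have h1 : dist y (P m βm) ≤ ε / 4 := by
      rcases hy with rfl | rfl
      · simp only [dist_self]; positivity
      · exact hqP m βm
    have h2 : dist z (P n βn) ≤ ε / 4 := by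
      rcases hz with rfl | rfl
      · simp only [dist_self]; positivity
      · exact hqP n βn
    have h3 := dist_triangle4 (P m βm) y z (P n βn)
    have h4 := dist_comm (P m βm) y
    have h5 := dist_comm z (P n βn)
    linarith
  -- the encoding sets
  let A0 : Set X := {y | ∃ nβ : ℕ × Ordinal, nβ.2 < Ω ∧ y = P nβ.1 nβ.2}
  let f0 : (ℕ → Set.Iic Ω) → Set X := fun ξ =>
    A0 ∪ {y | ∃ nβ : ℕ × Ordinal, nβ.2 < (ξ nβ.1).1 ∧ y = q nβ.1 nβ.2}
  have hβΩ : ∀ (ξ : ℕ → Set.Iic Ω) (n : ℕ) (β : Ordinal), β < (ξ n).1 → β < Ω :=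
    fun ξ n β h => lt_of_lt_of_le h (ξ n).2
  have hstruct : ∀ (ξ : ℕ → Set.Iic Ω) (y : X), y ∈ f0 ξ →
      ∃ n β, β < Ω ∧ (y = P n β ∨ y = q n β) := by
    intro ξ y hy
    rcases hy with ⟨⟨n, β⟩, hβ, rfl⟩ | ⟨⟨n, β⟩, hβ, rfl⟩
    · exact ⟨n, β, hβ, Or.inl rfl⟩
    · exact ⟨n, β, hβΩ ξ n β hβ, Or.inr rfl⟩
  have hne0 : ∀ ξ, (f0 ξ).Nonempty := fun ξ => ⟨P 0 0, Or.inl ⟨(0, 0), hΩpos, rfl⟩⟩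
  -- closedness
  have hclosed : ∀ ξ, IsClosed (f0 ξ) := by
    intro ξ
    apply isClosed_of_closure_subset
    intro x hx
    obtain ⟨y, hyS, hxy⟩ := Metric.mem_closure_iff.1 hx (ε/8) (by positivity)
    obtain ⟨n0, β0, hβ0, hy0⟩ := hstruct ξ y hyS
    have hsub : f0 ξ ∩ Metric.ball x (ε/8) ⊆ f0 ξ ∩ {P n0 β0, q n0 β0} := by
      rintro z ⟨hzS, hzb⟩
      refine ⟨hzS, ?_⟩
      by_contra hznot
      obtain ⟨m, γ, hγ, hz0⟩ := hstruct ξ z hzS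
      have hne : (m, γ) ≠ (n0, β0) := by
        intro h
        rw [Prod.mk.injEq] at h
        obtain ⟨h1, h2⟩ := h
        subst h1; subst h2
        apply hznot
        rcases hz0 with rfl | rfl
        · exact Set.mem_insert _ _
        · exact Set.mem_insert_of_mem _ rfl
      have hzy := hcross m γ n0 β0 hγ hβ0 hne z y hz0 hy0
      have h1 : dist z y ≤ dist z x + dist x y := dist_triangle z x y
      rw [Metric.mem_ball] at hzb
      linarith
    have hK : (f0 ξ ∩ {P n0 β0, q n0 β0}).Finite :=
      Set.Finite.subset ((Set.finite_singleton _).insert _) Set.inter_subset_right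
    have hxK : x ∈ closure (f0 ξ ∩ {P n0 β0, q n0 β0}) := by
      rw [Metric.mem_closure_iff]
      intro r hr
      obtain ⟨z, hzS, hxz⟩ := Metric.mem_closure_iff.1 hx (min r (ε/8))
        (lt_min hr (by positivity))
      refine ⟨z, hsub ⟨hzS, ?_⟩, lt_of_lt_of_le hxz (min_le_left _ _)⟩
      rw [Metric.mem_ball, dist_comm]
      exact lt_of_lt_of_le hxz (min_le_right _ _)
    rw [hK.isClosed.closure_eq] at hxK
    exact hxK.1
  -- membership characterization for q-points
  have hqmem : ∀ (ξ : ℕ → Set.Iic Ω) (n : ℕ) (β : Ordinal), β < Ω →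
      (q n β ∈ f0 ξ ↔ β < (ξ n).1) := by
    intro ξ n β hβ
    constructor
    · intro hy
      rcases hy with ⟨⟨m, γ⟩, hγ, heq⟩ | ⟨⟨m, γ⟩, hγ, heq⟩ <;> dsimp only at hγ heq
      · exfalso
        by_cases h : (n, β) = (m, γ)
        · rw [Prod.mk.injEq] at h
          obtain ⟨h1, h2⟩ := h
          subst h1; subst h2
          exact hq1 n β heq
        · have hd := hcross n β m γ hβ hγ h (q n β) (P m γ) (Or.inr rfl) (Or.inl rfl)
          rw [← heq, dist_self] at hd
          linarith
      · by_cases h : (n, β) = (m, γ)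
        · rw [Prod.mk.injEq] at h
          obtain ⟨h1, h2⟩ := h
          subst h1; subst h2
          exact hγ
        · exfalso
          have hd := hcross n β m γ hβ (hβΩ ξ m γ hγ) h (q n β) (q m γ) (Or.inr rfl) (Or.inr rfl)
          rw [← heq, dist_self] at hd
          linarith
    · intro h
      exact Or.inr ⟨(n, β), h, rfl⟩
  have hmono : ∀ ξ ξ', f0 ξ = f0 ξ' → ∀ n, (ξ n).1 ≤ (ξ' n).1 := by
    intro ξ ξ' hff n
    refine le_of_forall_lt fun β hβ => ?_
    have hβΩ' : β < Ω := hβΩ ξ n β hβ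
    have h1 : q n β ∈ f0 ξ := (hqmem ξ n β hβΩ').2 hβ
    rw [hff] at h1
    exact (hqmem ξ' n β hβΩ').1 h1
  have hinj0 : Function.Injective f0 := by
    intro ξ ξ' h
    funext n
    exact Subtype.ext (le_antisymm (hmono ξ ξ' h n) (hmono ξ' ξ h.symm n))
  -- continuity of distance functionals
  have hcont : ∀ x : X, Continuous fun ξ : ℕ → Set.Iic Ω => Metric.infDist x (f0 ξ) := by
    intro x
    set B : ENNReal := EMetric.infEdist x A0 with hBdef
    have hBne : B ≠ ⊤ := by
      have h1 : B ≤ edist x (P 0 0) :=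
        EMetric.infEdist_le_edist_of_mem ⟨(0, 0), hΩpos, rfl⟩
      exact ne_top_of_le_ne_top (edist_ne_top x _) h1
    let H : ℕ → Ordinal → ENNReal := fun n γ => ⨅ β : {β : Ordinal // β < γ}, edist x (q n β.1)
    have hHdef : ∀ n γ, H n γ = ⨅ β : {β : Ordinal // β < γ}, edist x (q n β.1) :=
      fun _ _ => rfl
    have hHcont : ∀ n : ℕ, Continuous fun ξ : ℕ → Set.Iic Ω => H n (ξ n).1 := by
      intro n
      exact (aux_cont_iInf (fun β => edist x (q n β))).comp
        (continuous_subtype_val.comp (continuous_apply n))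
    have hE : ∀ ξ, EMetric.infEdist x (f0 ξ) = B ⊓ ⨅ n : ℕ, H n (ξ n).1 := by
      intro ξ
      apply le_antisymm
      · refine le_inf (EMetric.infEdist_anti Set.subset_union_left) ?_
        refine le_iInf fun n => le_iInf fun β => ?_
        exact EMetric.infEdist_le_edist_of_mem (Or.inr ⟨(n, β.1), β.2, rfl⟩)
      · refine Metric.le_infEDist.2 ?_
        rintro y (hy | ⟨⟨n, β⟩, hβ, rfl⟩)
        · exact le_trans inf_le_left (EMetric.infEdist_le_edist_of_mem hy)
        · exact le_trans inf_le_right (le_trans (iInf_le _ n) (iInf_le _ (⟨β, hβ⟩ : {β' : Ordinal // β' < (ξ n).1})))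
    have hHB : ∀ (n : ℕ) (γ : Ordinal), γ ≤ Ω → B ≤ H n γ + ENNReal.ofReal (δ n) := by
      intro n γ hγ
      rw [hHdef, ENNReal.iInf_add]
      refine le_iInf fun β => ?_
      have hβΩ'' : β.1 < Ω := lt_of_lt_of_le β.2 hγ
      have h1 : B ≤ edist x (P n β.1) :=
        EMetric.infEdist_le_edist_of_mem ⟨(n, β.1), hβΩ'', rfl⟩
      have h2 : edist x (P n β.1) ≤ edist x (q n β.1) + edist (q n β.1) (P n β.1) :=
        edist_triangle _ _ _
      have h3 : edist (q n β.1) (P n β.1) ≤ ENNReal.ofReal (δ n) := by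
        rw [edist_dist]
        exact ENNReal.ofReal_le_ofReal (hq2 n β.1).le
      exact h1.trans (h2.trans (add_le_add_right h3 _))
    let g : ℕ → (ℕ → Set.Iic Ω) → ENNReal :=
      fun N ξ => B ⊓ (Finset.range (N+1)).inf fun n => H n (ξ n).1
    have hgdef : ∀ N ξ, g N ξ = B ⊓ (Finset.range (N+1)).inf fun n => H n (ξ n).1 :=
      fun _ _ => rfl
    have hgcont : ∀ N, Continuous (g N) := by
      intro N
      have hfin : ∀ s : Finset ℕ, Continuous fun ξ : ℕ → Set.Iic Ω =>
          s.inf fun n => H n (ξ n).1 := by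
        intro s
        induction s using Finset.induction_on with
        | empty => simpa using continuous_const
        | insert _ _ h ih =>
          simp only [Finset.inf_insert]
          exact Continuous.min (hHcont _) ih
      exact Continuous.min continuous_const (hfin _)
    have hgB : ∀ N ξ, g N ξ ≤ B := fun N ξ => inf_le_left
    have hgne : ∀ N ξ, g N ξ ≠ ⊤ := fun N ξ => ne_top_of_le_ne_top hBne (hgB N ξ)
    have hEne : ∀ ξ, EMetric.infEdist x (f0 ξ) ≠ ⊤ := by
      intro ξ
      rw [hE ξ]
      exact ne_top_of_le_ne_top hBne inf_le_left
    have hEg : ∀ N ξ, EMetric.infEdist x (f0 ξ) ≤ g N ξ := by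
      intro N ξ
      rw [hE ξ, hgdef]
      exact inf_le_inf_left B (Finset.le_inf fun n _ => iInf_le _ n)
    have hgE : ∀ N ξ, g N ξ ≤ EMetric.infEdist x (f0 ξ) + ENNReal.ofReal (δ (N+1)) := by
      intro N ξ
      rw [hE ξ]
      have hmin : (B ⊓ ⨅ n : ℕ, H n (ξ n).1) + ENNReal.ofReal (δ (N+1))
          = (B + ENNReal.ofReal (δ (N+1))) ⊓
            ((⨅ n : ℕ, H n (ξ n).1) + ENNReal.ofReal (δ (N+1))) := by
        rcases le_total B (⨅ n : ℕ, H n (ξ n).1) with h | h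
        · rw [inf_eq_left.2 h, inf_eq_left.2 (add_le_add_left h _)]
        · rw [inf_eq_right.2 h, inf_eq_right.2 (add_le_add_left h _)]
      rw [hmin, ENNReal.iInf_add]
      refine le_inf (le_trans (hgB N ξ) le_self_add) (le_iInf fun n => ?_)
      rcases le_or_gt n N with hn | hn
      · refine le_trans ?_ le_self_add
        rw [hgdef]
        exact le_trans inf_le_right (Finset.inf_le (Finset.mem_range.2 (Nat.lt_succ_of_le hn)))
      · have hδn : ENNReal.ofReal (δ n) ≤ ENNReal.ofReal (δ (N+1)) :=
          ENNReal.ofReal_le_ofReal (hδanti (N+1) n hn)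
        have hB2 := hHB n (ξ n).1 (ξ n).2
        exact le_trans (hgB N ξ) (le_trans hB2 (add_le_add_right hδn _))
    have hGcont : ∀ N, Continuous fun ξ => (g N ξ).toReal := by
      intro N
      rw [continuous_iff_continuousAt]
      intro ξ
      exact (ENNReal.tendsto_toReal (hgne N ξ)).comp ((hgcont N).tendsto ξ)
    have hdist : ∀ N ξ, dist (Metric.infDist x (f0 ξ)) ((g N ξ).toReal) ≤ δ (N+1) := by
      intro N ξ
      have h1 : (EMetric.infEdist x (f0 ξ)).toReal ≤ (g N ξ).toReal :=
        ENNReal.toReal_mono (hgne N ξ) (hEg N ξ)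
      have h2 : (g N ξ).toReal ≤ (EMetric.infEdist x (f0 ξ)).toReal + δ (N+1) := by
        have h3 := ENNReal.toReal_mono
          (by exact ENNReal.add_ne_top.2 ⟨hEne ξ, ENNReal.ofReal_ne_top⟩) (hgE N ξ)
        rwa [ENNReal.toReal_add (hEne ξ) ENNReal.ofReal_ne_top,
          ENNReal.toReal_ofReal (hδpos _).le] at h3
      have hFdef : Metric.infDist x (f0 ξ) = (EMetric.infEdist x (f0 ξ)).toReal := rfl
      rw [hFdef, Real.dist_eq, abs_le]
      constructor <;> linarith
    have hunif : TendstoUniformly (fun N ξ => (g N ξ).toReal)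
        (fun ξ => Metric.infDist x (f0 ξ)) Filter.atTop := by
      rw [Metric.tendstoUniformly_iff]
      intro ρ hρ
      have hδt : Filter.Tendsto (fun N : ℕ => δ (N+1)) Filter.atTop (𝓝 0) :=
        hδ0.comp (Filter.tendsto_add_atTop_nat 1)
      filter_upwards [hδt.eventually_lt_const hρ] with N hN ξ
      exact lt_of_le_of_lt (hdist N ξ) hN
    exact hunif.continuous (Filter.Eventually.of_forall hGcont).frequently
  -- assemble
  let f : (ℕ → Set.Iic Ω) → CL X := fun ξ => ⟨f0 ξ, hne0 ξ, hclosed ξ⟩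
  haveI : CompactSpace (Set.Iic Ω) := iic_compact
  letI tCL : TopologicalSpace (CL X) := WijsmanTopology X
  haveI : T2Space (CL X) := wijsman_t2 X
  have hfinj : Function.Injective f := fun ξ ξ' h => hinj0 (congrArg Subtype.val h)
  have hfc : @Continuous _ _ Pi.topologicalSpace (WijsmanTopology X) f := by
    show @Continuous _ _ _
      (⨅ x : X, TopologicalSpace.induced (fun A : CL X => Metric.infDist x A.1) inferInstance) f
    rw [continuous_iInf_rng]
    intro x
    rw [continuous_induced_rng]
    exact hcont x
  exact ⟨f, (hfc.isClosedEmbedding hfinj).toIsEmbedding⟩
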